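/- Suppose N ≥ 2 and ρ(A) < 1, and for each user i let q_i = C (I_N − A)^{-1} b_i + d_i. Then the influence score of user i, defined by Ψ_i = (1/(N−1)) · Σ_{n ≠ i} (q_i)_n, satisfies 0 ≤ Ψ_i ≤ 1. -/

import Mathlib

open Matrix Finset Filter

/-- Spectral radius of a real square matrix: the maximum of `|z|` over the
complex eigenvalues `z` (roots of the characteristic polynomial over `ℂ`). -/
noncomputable def specRad (N : ℕ) (T : Matrix (Fin N) (Fin N) ℝ) : ℝ :=
  sSup {r : ℝ | ∃ z : ℂ, ((T.map Complex.ofReal).charpoly).IsRoot z ∧ r = ‖z‖}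

/-- The propagation matrix `A`. -/
noncomputable def propA (N : ℕ) (L : Fin N → Finset (Fin N)) (lam mu : Fin N → ℝ) :
    Matrix (Fin N) (Fin N) ℝ :=
  Matrix.of fun j k => if k ∈ L j then mu k / (∑ l ∈ L j, (lam l + mu l)) else 0

/-- The vector `b_i`. -/
noncomputable def bvec (N : ℕ) (L : Fin N → Finset (Fin N)) (lam mu : Fin N → ℝ)
    (i : Fin N) : Fin N → ℝ :=
  fun j => if i ∈ L j then lam i / (∑ l ∈ L j, (lam l + mu l)) else 0

/-- The diagonal matrix `C`. -/
noncomputable def Cmat (N : ℕ) (lam mu : Fin N → ℝ) : Matrix (Fin N) (Fin N) ℝ :=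
  Matrix.diagonal fun j => mu j / (lam j + mu j)

/-- The vector `d_i`. -/
noncomputable def dvec (N : ℕ) (lam mu : Fin N → ℝ) (i : Fin N) : Fin N → ℝ :=
  fun j => if j = i then lam i / (lam i + mu i) else 0

section Aux

attribute [local instance] Matrix.linftyOpNormedRing Matrix.linftyOpNormedAlgebra

open Polynomial

lemma aux_eval_charpoly {n : Type*} [Fintype n] [DecidableEq n] {R : Type*} [CommRing R]
    (M : Matrix n n R) (r : R) :
    M.charpoly.eval r = (Matrix.scalar n r - M).det := by
  rw [Matrix.charpoly, _root_.eval_det, matPolyEquiv_charmatrix]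
  simp

lemma aux_root_lt (N : ℕ) (T : Matrix (Fin N) (Fin N) ℝ) (h : specRad N T < 1) (z : ℂ)
    (hz : ((T.map Complex.ofReal).charpoly).IsRoot z) : ‖z‖ < 1 := by
  refine lt_of_le_of_lt ?_ h
  refine le_csSup ?_ ⟨z, hz, rfl⟩
  have hne : (T.map Complex.ofReal).charpoly ≠ 0 := (Matrix.charpoly_monic _).ne_zero
  have heq : {r : ℝ | ∃ z : ℂ, ((T.map Complex.ofReal).charpoly).IsRoot z ∧ r = ‖z‖}
      = (fun z : ℂ => ‖z‖) '' {z | ((T.map Complex.ofReal).charpoly).IsRoot z} := by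
    ext r; simp [Set.mem_image, eq_comm]
  rw [heq]
  exact ((Polynomial.finite_setOf_isRoot hne).image _).bddAbove

lemma aux_det_ne (N : ℕ) (T : Matrix (Fin N) (Fin N) ℝ) (h : specRad N T < 1) :
    (1 - T).det ≠ 0 := by
  intro hdet
  have h1 : ((T.map Complex.ofReal).charpoly).IsRoot 1 := by
    rw [IsRoot, aux_eval_charpoly, _root_.map_one (Matrix.scalar (Fin N))]
    have : (1 : Matrix (Fin N) (Fin N) ℂ) - T.map Complex.ofReal
        = Complex.ofRealHom.mapMatrix (1 - T) := by
      ext j k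
      simp only [RingHom.mapMatrix_apply, Matrix.sub_apply, Matrix.map_apply,
        Matrix.one_apply]
      split <;> simp
    rw [this, ← RingHom.map_det, hdet, map_zero]
  simpa using aux_root_lt N T h 1 h1

lemma aux_exists_pow_norm_lt (N : ℕ) (hN : 1 ≤ N) (T : Matrix (Fin N) (Fin N) ℝ)
    (h : specRad N T < 1) : ∃ k, 1 ≤ k ∧ ‖T ^ k‖ < 1 := by
  have : Nonempty (Fin N) := Fin.pos_iff_nonempty.mp hN
  set T' : Matrix (Fin N) (Fin N) ℂ := T.map Complex.ofReal with hT'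
  have hspec : ∀ z ∈ spectrum ℂ T', ‖z‖₊ < 1 := by
    intro z hz
    rw [spectrum.mem_iff] at hz
    have hroot : T'.charpoly.IsRoot z := by
      rw [IsRoot, aux_eval_charpoly]
      by_contra hdetz
      exact hz ((Matrix.isUnit_iff_isUnit_det _).mpr (isUnit_iff_ne_zero.mpr hdetz))
    have := aux_root_lt N T h z hroot
    rw [← NNReal.coe_lt_coe]
    simpa [Complex.norm_def] using this
  have hrad : spectralRadius ℂ T' < 1 := by
    simpa using spectrum.spectralRadius_lt_of_forall_lt T' hspec
  have hg := spectrum.pow_nnnorm_pow_one_div_tendsto_nhds_spectralRadius T'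
  have hev : ∀ᶠ k : ℕ in atTop, (‖T' ^ k‖₊ : ENNReal) ^ (1 / k : ℝ) < 1 :=
    hg.eventually_lt_const hrad
  obtain ⟨k, hk1, hk⟩ := (hev.and (eventually_ge_atTop 1)).exists
  refine ⟨k, hk, ?_⟩
  have hlt : ((‖T' ^ k‖₊ : ENNReal)) < 1 := by
    by_contra hx
    push_neg at hx
    exact absurd hk1 (not_lt.mpr (ENNReal.one_le_rpow hx (by positivity)))
  have hpow : T' ^ k = (T ^ k).map Complex.ofReal := by
    have := map_pow (Complex.ofRealHom.mapMatrix) T k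
    exact this.symm
  have hnorm_eq : ‖T' ^ k‖₊ = ‖T ^ k‖₊ := by
    rw [hpow]; simp [Matrix.linfty_opNNNorm_def]
  rw [hpow] at hlt
  have : ‖T ^ k‖₊ < 1 := by
    rw [← hnorm_eq, hpow]
    exact_mod_cast hlt
  exact_mod_cast this

lemma aux_pow_entry_nonneg {N : ℕ} {T : Matrix (Fin N) (Fin N) ℝ}
    (hT : ∀ j l, 0 ≤ T j l) (k : ℕ) : ∀ j l, 0 ≤ (T ^ k) j l := by
  induction k with
  | zero => intro j l; simp [Matrix.one_apply]; positivity
  | succ k ih =>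
    intro j l
    rw [pow_succ, Matrix.mul_apply]
    exact Finset.sum_nonneg fun m _ => mul_nonneg (ih j m) (hT m l)

lemma aux_mulVec_nonneg {N : ℕ} {T : Matrix (Fin N) (Fin N) ℝ} {v : Fin N → ℝ}
    (hT : ∀ j l, 0 ≤ T j l) (hv : ∀ l, 0 ≤ v l) : ∀ j, 0 ≤ T.mulVec v j := by
  intro j
  simp only [Matrix.mulVec, dotProduct]
  exact Finset.sum_nonneg fun l _ => mul_nonneg (hT j l) (hv l)

lemma aux_inv_mulVec_nonneg {N : ℕ} {T : Matrix (Fin N) (Fin N) ℝ}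
    (hT : ∀ j l, 0 ≤ T j l) (hdet : IsUnit (1 - T).det)
    {k0 : ℕ} (hnorm : ‖T ^ k0‖ < 1)
    {v : Fin N → ℝ} (hv : ∀ l, 0 ≤ v l) : ∀ j, 0 ≤ (1 - T)⁻¹.mulVec v j := by
  set x := (1 - T)⁻¹.mulVec v with hxdef
  have hMx : (1 - T).mulVec x = v := by
    rw [hxdef, Matrix.mulVec_mulVec, Matrix.mul_nonsing_inv _ hdet, Matrix.one_mulVec]
  have hx : x = T.mulVec x + v := by
    have h := hMx
    rw [Matrix.sub_mulVec, Matrix.one_mulVec] at h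
    rw [← h]; abel
  have hiter : ∀ K : ℕ, x = (T ^ K).mulVec x + ∑ k ∈ Finset.range K, (T ^ k).mulVec v := by
    intro K
    induction K with
    | zero => simp [Matrix.one_mulVec]
    | succ K ih =>
      have h5 : (T ^ K).mulVec x = (T ^ (K + 1)).mulVec x + (T ^ K).mulVec v := by
        calc (T ^ K).mulVec x = (T ^ K).mulVec (T.mulVec x + v) := by rw [← hx]
          _ = (T ^ (K + 1)).mulVec x + (T ^ K).mulVec v := by
              rw [Matrix.mulVec_add, Matrix.mulVec_mulVec, ← pow_succ]
      rw [Finset.sum_range_succ]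
      conv_lhs => rw [ih]
      rw [h5]
      abel
  intro j
  have hxj : ∀ m : ℕ, -(‖T ^ k0‖ ^ m * ‖x‖) ≤ x j := by
    intro m
    have h2 : x j = ((T ^ (k0 * m)).mulVec x) j
        + ∑ k ∈ Finset.range (k0 * m), ((T ^ k).mulVec v) j := by
      have := congrFun (hiter (k0 * m)) j
      simpa using this
    have h3 : 0 ≤ ∑ k ∈ Finset.range (k0 * m), ((T ^ k).mulVec v) j :=
      Finset.sum_nonneg fun k _ => aux_mulVec_nonneg (aux_pow_entry_nonneg hT k) hv j
    have habs : |((T ^ (k0 * m)).mulVec x) j| ≤ ‖(T ^ (k0 * m)).mulVec x‖ :=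
      (norm_le_pi_norm _ j).trans_eq' (by simp [Real.norm_eq_abs])
    have h4 : |((T ^ (k0 * m)).mulVec x) j| ≤ ‖T ^ k0‖ ^ m * ‖x‖ := by
      rcases Nat.eq_zero_or_pos m with hm | hm
      · subst hm
        simpa using habs.trans (by simp [Matrix.one_mulVec])
      · calc |((T ^ (k0 * m)).mulVec x) j| ≤ ‖(T ^ (k0 * m)).mulVec x‖ := habs
          _ ≤ ‖T ^ (k0 * m)‖ * ‖x‖ := Matrix.linfty_opNorm_mulVec _ _
          _ ≤ ‖T ^ k0‖ ^ m * ‖x‖ := by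
              gcongr
              rw [pow_mul]
              exact norm_pow_le' _ hm
    have := (abs_le.mp h4).1
    linarith
  have hlim : Tendsto (fun m : ℕ => -(‖T ^ k0‖ ^ m * ‖x‖)) atTop (nhds 0) := by
    have := (tendsto_pow_atTop_nhds_zero_of_lt_one (norm_nonneg _) hnorm).mul_const ‖x‖
    simpa using this.neg
  exact le_of_tendsto' hlim hxj

end Aux

/-- if `N ≥ 2` and `ρ(A) < 1`, the influence score
`Ψ_i = (1/(N-1)) Σ_{n ≠ i} (q_i)_n` of every user `i` satisfies
`0 ≤ Ψ_i ≤ 1`. -/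
theorem stmt13 (N : ℕ) (hN : 2 ≤ N) (L : Fin N → Finset (Fin N))
    (hL : ∀ j, (L j).Nonempty) (lam mu : Fin N → ℝ)
    (hlam : ∀ n, 0 ≤ lam n) (hmu : ∀ n, 0 ≤ mu n)
    (hpos : ∀ n, 0 < lam n + mu n)
    (hrho : specRad N (propA N L lam mu) < 1) (i : Fin N) :
    0 ≤ (1 / ((N : ℝ) - 1)) *
          ∑ n ∈ Finset.univ.filter (fun n => n ≠ i),
            ((Cmat N lam mu).mulVec
                ((1 - propA N L lam mu)⁻¹.mulVec (bvec N L lam mu i)) +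
              dvec N lam mu i) n ∧
    (1 / ((N : ℝ) - 1)) *
          ∑ n ∈ Finset.univ.filter (fun n => n ≠ i),
            ((Cmat N lam mu).mulVec
                ((1 - propA N L lam mu)⁻¹.mulVec (bvec N L lam mu i)) +
              dvec N lam mu i) n ≤ 1 := by
  classical
  set A := propA N L lam mu with hA
  set b := bvec N L lam mu i with hb
  -- basic positivity
  have hS : ∀ j, 0 < ∑ l ∈ L j, (lam l + mu l) := fun j =>
    Finset.sum_pos (fun l _ => hpos l) (hL j)
  have hAnn : ∀ j l, 0 ≤ A j l := by
    intro j l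
    rw [hA]
    simp only [propA, Matrix.of_apply]
    split
    · exact div_nonneg (hmu l) (hS j).le
    · exact le_refl 0
  have hbnn : ∀ l, 0 ≤ b l := by
    intro l
    rw [hb]
    simp only [bvec]
    split
    · exact div_nonneg (hlam i) (hS l).le
    · exact le_refl 0
  have hdet : IsUnit (1 - A).det :=
    isUnit_iff_ne_zero.mpr (aux_det_ne N A hrho)
  obtain ⟨k0, hk01, hk0norm⟩ := aux_exists_pow_norm_lt N (by omega) A hrho
  -- the vector x
  set x := (1 - A)⁻¹.mulVec b with hx
  have hxnn : ∀ j, 0 ≤ x j := aux_inv_mulVec_nonneg hAnn hdet hk0norm hbnn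
  -- upper bound: x ≤ 1
  set w : Fin N → ℝ := fun _ => 1 with hw
  set c : Fin N → ℝ := w - A.mulVec w - b with hc
  have hcnn : ∀ j, 0 ≤ c j := by
    intro j
    have hAw : A.mulVec w j = (∑ k ∈ L j, mu k) / (∑ l ∈ L j, (lam l + mu l)) := by
      rw [hA, hw]
      simp only [Matrix.mulVec, dotProduct, propA, Matrix.of_apply, mul_one]
      rw [Finset.sum_ite_mem, Finset.univ_inter, Finset.sum_div]
    have hble : b j ≤ (∑ k ∈ L j, lam k) / (∑ l ∈ L j, (lam l + mu l)) := by
      rw [hb]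
      simp only [bvec]
      split
      · next hmem =>
          gcongr <;>
            first
              | exact (hS j).le
              | exact hS j
              | exact Finset.single_le_sum (f := lam) (fun l _ => hlam l) hmem
      · exact div_nonneg (Finset.sum_nonneg fun l _ => hlam l) (hS j).le
    have key : A.mulVec w j + b j ≤ 1 := by
      rw [hAw]
      have : (∑ k ∈ L j, mu k) / (∑ l ∈ L j, (lam l + mu l))
          + (∑ k ∈ L j, lam k) / (∑ l ∈ L j, (lam l + mu l)) = 1 := by
        rw [← add_div, ← Finset.sum_add_distrib]
        rw [div_eq_one_iff_eq (hS j).ne']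
        exact Finset.sum_congr rfl fun l _ => by ring
      linarith [hble]
    simp only [hc, Pi.sub_apply, hw]
    linarith
  have hyeq : w - x = (1 - A)⁻¹.mulVec c := by
    have h1 : (1 - A).mulVec (w - x) = c := by
      rw [Matrix.mulVec_sub]
      have h2 : (1 - A).mulVec x = b := by
        rw [hx, Matrix.mulVec_mulVec, Matrix.mul_nonsing_inv _ hdet, Matrix.one_mulVec]
      rw [h2, Matrix.sub_mulVec, Matrix.one_mulVec, hc]
    rw [← h1, Matrix.mulVec_mulVec, Matrix.nonsing_inv_mul _ hdet, Matrix.one_mulVec]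
  have hxle : ∀ j, x j ≤ 1 := by
    intro j
    have := aux_inv_mulVec_nonneg hAnn hdet hk0norm hcnn j
    rw [← hyeq] at this
    simpa [hw] using this
  -- entries of q for n ≠ i
  have hq : ∀ n, n ≠ i →
      ((Cmat N lam mu).mulVec x + dvec N lam mu i) n = mu n / (lam n + mu n) * x n := by
    intro n hn
    simp [Cmat, dvec, Matrix.mulVec_diagonal, hn]
  have hqnn : ∀ n ∈ Finset.univ.filter (fun n => n ≠ i),
      0 ≤ ((Cmat N lam mu).mulVec x + dvec N lam mu i) n := by
    intro n hn
    rw [hq n (Finset.mem_filter.mp hn).2]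
    exact mul_nonneg (div_nonneg (hmu n) (hpos n).le) (hxnn n)
  have hqle : ∀ n ∈ Finset.univ.filter (fun n => n ≠ i),
      ((Cmat N lam mu).mulVec x + dvec N lam mu i) n ≤ 1 := by
    intro n hn
    rw [hq n (Finset.mem_filter.mp hn).2]
    apply mul_le_one₀ ?_ (hxnn n) (hxle n)
    rw [div_le_one (hpos n)]
    linarith [hlam n]
  -- cardinality
  have hcard : (Finset.univ.filter (fun n => n ≠ i)).card = N - 1 := by
    rw [Finset.filter_ne', Finset.card_erase_of_mem (Finset.mem_univ i)]
    simp
  have hsum_nn : 0 ≤ ∑ n ∈ Finset.univ.filter (fun n => n ≠ i),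
      ((Cmat N lam mu).mulVec x + dvec N lam mu i) n := Finset.sum_nonneg hqnn
  have hsum_le : ∑ n ∈ Finset.univ.filter (fun n => n ≠ i),
      ((Cmat N lam mu).mulVec x + dvec N lam mu i) n ≤ (N : ℝ) - 1 := by
    calc _ ≤ ((Finset.univ.filter (fun n => n ≠ i)).card : ℝ) * 1 := by
          simpa using Finset.sum_le_card_nsmul _ _ 1 hqle
      _ = (N : ℝ) - 1 := by
          rw [hcard, mul_one, Nat.cast_sub (by omega), Nat.cast_one]
  have hN1 : (0 : ℝ) < (N : ℝ) - 1 := by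
    have : (2 : ℝ) ≤ N := by exact_mod_cast hN
    linarith
  constructor
  · exact mul_nonneg (by positivity) hsum_nn
  · rw [div_mul_eq_mul_div, one_mul, div_le_one hN1]
    exact hsum_le
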